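/- Let E be a Euclidean space of dimension n and ξ ∈ E* nonzero. Then the space of symmetric m-tensors decomposes orthogonally as ⊗^m_S E* = ran(j_ξ) ⊕ ker(ι_{ξ^♯}), where j_ξ(u) = S(ξ ⊗ u) is symmetrized tensor multiplication by ξ and ι_{ξ^♯} is contraction with the dual vector ξ^♯. -/

import Mathlib

open scoped RealInnerProductSpace

noncomputable section

abbrev E (n : ℕ) := EuclideanSpace ℝ (Fin n)

def IsSymMultilinear {n m : ℕ} (T : (Fin m → E n) → ℝ) : Prop :=
  (∀ (i : Fin m) (v : Fin m → E n) (x y : E n),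
    T (Function.update v i (x + y)) = T (Function.update v i x) + T (Function.update v i y)) ∧
  (∀ (i : Fin m) (v : Fin m → E n) (c : ℝ) (x : E n),
    T (Function.update v i (c • x)) = c * T (Function.update v i x)) ∧
  (∀ (σ : Equiv.Perm (Fin m)) (v : Fin m → E n), T (v ∘ σ) = T v)

/-- `T ∈ ker ι_{w}`: the contraction of `T` with `w` vanishes. -/
def contrZero {n m : ℕ} (w : E n) (T : (Fin m → E n) → ℝ) : Prop :=
  ∀ (j : Fin m) (v : Fin m → E n), v j = w → T v = 0

/-- `j_ξ u = S(ξ ⊗ u)`: symmetrized tensor multiplication of the symmetric `m`-tensor `u`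
by the covector dual to `w`. -/
def jApp {n m : ℕ} (w : E n) (u : (Fin m → E n) → ℝ) : (Fin (m + 1) → E n) → ℝ :=
  fun v => (∑ i : Fin (m + 1), ⟪w, v i⟫ * u (fun j => v (i.succAbove j))) / (m + 1)

/-- The inner product on `m`-tensors induced by the Euclidean structure
(sum of products of coefficients over the standard orthonormal basis). -/
def tInner {n m : ℕ} (S T : (Fin m → E n) → ℝ) : ℝ :=
  ∑ K : Fin m → Fin n,
    S (fun j => EuclideanSpace.single (K j) (1 : ℝ)) *
      T (fun j => EuclideanSpace.single (K j) (1 : ℝ))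

namespace X16

variable {n : ℕ}

def eV {m : ℕ} (K : Fin m → Fin n) : Fin m → E n := fun j => EuclideanSpace.single (K j) 1

def evalT {m : ℕ} (c : (Fin m → Fin n) → ℝ) : (Fin m → E n) → ℝ :=
  fun v => ∑ K : Fin m → Fin n, (∏ j, v j (K j)) * c K

def coeffT {m : ℕ} (T : (Fin m → E n) → ℝ) : (Fin m → Fin n) → ℝ := fun K => T (eV K)

def IsML {m : ℕ} (T : (Fin m → E n) → ℝ) : Prop :=
  (∀ (i : Fin m) (v : Fin m → E n) (x y : E n),
    T (Function.update v i (x + y)) = T (Function.update v i x) + T (Function.update v i y)) ∧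
  (∀ (i : Fin m) (v : Fin m → E n) (c : ℝ) (x : E n),
    T (Function.update v i (c • x)) = c * T (Function.update v i x))

def IsSymC {m : ℕ} (c : (Fin m → Fin n) → ℝ) : Prop :=
  ∀ (σ : Equiv.Perm (Fin m)) (K : Fin m → Fin n), c (K ∘ σ) = c K

def Jf {m : ℕ} (w : E n) (c : (Fin m → Fin n) → ℝ) : (Fin (m + 1) → Fin n) → ℝ :=
  fun K => (∑ i, w (K i) * c (K ∘ i.succAbove)) / (m + 1)

def If_ {m : ℕ} (w : E n) (d : (Fin (m + 1) → Fin n) → ℝ) : (Fin m → Fin n) → ℝ :=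
  fun K => ∑ k, w k * d (Fin.cons k K)

lemma euclid_decomp {x : E n} : x = ∑ k, x k • EuclideanSpace.single k 1 := by
  ext j
  have : (∑ k, x k • EuclideanSpace.single k (1:ℝ)) j
      = ∑ k, (x k • EuclideanSpace.single k (1:ℝ)) j := by
    rw [WithLp.ofLp_sum]; exact Finset.sum_apply _ _ _
  rw [this]
  simp [EuclideanSpace.single_apply]

/-- expansion of a multilinear map in coordinates -/
lemma expansion {m : ℕ} {T : (Fin m → E n) → ℝ} (hT : IsML T) (v : Fin m → E n) :
    T v = evalT (coeffT T) v := by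
  classical
  let M : MultilinearMap ℝ (fun _ : Fin m => E n) ℝ :=
    { toFun := T
      map_update_add' := fun {inst} v i x y => by
        rw [Subsingleton.elim inst (instDecidableEqFin m)]; exact hT.1 i v x y
      map_update_smul' := fun {inst} v i c x => by
        rw [Subsingleton.elim inst (instDecidableEqFin m)]
        simpa [smul_eq_mul] using hT.2 i v c x }
  have h1 : T v = M (fun i => ∑ k, v i k • EuclideanSpace.single k 1) := by
    show T v = T _
    congr 1
    funext i
    exact euclid_decomp
  rw [h1, M.map_sum]
  refine Finset.sum_congr rfl fun K _ => ?_
  have h2 := M.map_smul_univ (fun i => v i (K i)) (eV K)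
  simp only [smul_eq_mul] at h2
  exact h2

lemma evalT_eV {m : ℕ} (c : (Fin m → Fin n) → ℝ) (K : Fin m → Fin n) :
    evalT c (eV K) = c K := by
  classical
  rw [evalT, Finset.sum_eq_single K]
  · simp [eV, EuclideanSpace.single_apply]
  · intro K' _ hne
    have : ∃ j, K' j ≠ K j := by
      by_contra hx
      push_neg at hx
      exact hne (funext hx)
    obtain ⟨j, hj⟩ := this
    have : (∏ j', (eV K) j' (K' j')) = 0 := by
      apply Finset.prod_eq_zero (Finset.mem_univ j)
      simp [eV, EuclideanSpace.single_apply, hj]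
    rw [this, zero_mul]
  · intro h; exact absurd (Finset.mem_univ K) h
lemma update_factor {m : ℕ} (v : Fin m → E n) (i : Fin m) (x : E n) (K : Fin m → Fin n) :
    (fun j => (Function.update v i x) j (K j))
      = Function.update (fun j => v j (K j)) i (x (K i)) := by
  funext j
  rcases eq_or_ne j i with rfl | hne
  · simp
  · simp [Function.update_of_ne hne]

lemma evalT_isML {m : ℕ} (c : (Fin m → Fin n) → ℝ) : IsML (evalT c) := by
  classical
  constructor
  · intro i v x y
    simp only [evalT]
    rw [← Finset.sum_add_distrib]
    refine Finset.sum_congr rfl fun K _ => ?_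
    rw [update_factor, update_factor, update_factor,
      Finset.prod_update_of_mem (Finset.mem_univ i),
      Finset.prod_update_of_mem (Finset.mem_univ i),
      Finset.prod_update_of_mem (Finset.mem_univ i)]
    have : (x + y) (K i) = x (K i) + y (K i) := rfl
    rw [this]; ring
  · intro i v r x
    simp only [evalT]
    rw [Finset.mul_sum]
    refine Finset.sum_congr rfl fun K _ => ?_
    rw [update_factor, update_factor,
      Finset.prod_update_of_mem (Finset.mem_univ i),
      Finset.prod_update_of_mem (Finset.mem_univ i)]
    have : (r • x) (K i) = r * x (K i) := rfl
    rw [this]; ring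

lemma evalT_symm {m : ℕ} {c : (Fin m → Fin n) → ℝ} (hc : IsSymC c)
    (σ : Equiv.Perm (Fin m)) (v : Fin m → E n) : evalT c (v ∘ σ) = evalT c v := by
  classical
  simp only [evalT]
  refine Fintype.sum_equiv (Equiv.arrowCongr σ (Equiv.refl (Fin n))) _ _ fun K => ?_
  have he : (Equiv.arrowCongr σ (Equiv.refl (Fin n))) K = K ∘ σ.symm := rfl
  rw [he]
  have h1 : c (K ∘ σ.symm) = c K := by
    have := hc σ.symm K; simpa using this
  rw [h1]
  congr 1
  refine Fintype.prod_equiv σ _ _ fun j => ?_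
  show v (σ j) (K j) = v (σ j) (K (σ.symm (σ j)))
  rw [Equiv.symm_apply_apply]

lemma coeff_symm {m : ℕ} {T : (Fin m → E n) → ℝ}
    (hT : ∀ (σ : Equiv.Perm (Fin m)) (v : Fin m → E n), T (v ∘ σ) = T v) :
    IsSymC (coeffT T) := by
  intro σ K
  have : eV (K ∘ σ) = (eV K) ∘ σ := rfl
  show T (eV (K ∘ σ)) = T (eV K)
  rw [this, hT σ (eV K)]

lemma ml_update_zero {m : ℕ} {T : (Fin m → E n) → ℝ} (hT : IsML T)
    (i : Fin m) (v : Fin m → E n) : T (Function.update v i 0) = 0 := by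
  have := hT.1 i v 0 0
  simp only [add_zero] at this
  linarith

lemma ml_update_sum {m : ℕ} {T : (Fin m → E n) → ℝ} (hT : IsML T)
    (i : Fin m) (v : Fin m → E n) {α : Type*} (s : Finset α) (f : α → E n) :
    T (Function.update v i (∑ k ∈ s, f k)) = ∑ k ∈ s, T (Function.update v i (f k)) := by
  classical
  induction s using Finset.induction_on with
  | empty => simpa using ml_update_zero hT i v
  | insert a s hx ih =>
    rw [Finset.sum_insert hx, Finset.sum_insert hx, hT.1, ih]
lemma succAbove_conj {m : ℕ} (σ : Equiv.Perm (Fin (m + 1))) (p : Fin (m + 1)) :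
    ∃ τ : Equiv.Perm (Fin m), ∀ j, σ ((σ.symm p).succAbove j) = p.succAbove (τ j) := by
  classical
  have hne : ∀ j, σ ((σ.symm p).succAbove j) ≠ p := by
    intro j h
    have : (σ.symm p).succAbove j = σ.symm p := by
      have := congrArg σ.symm h
      simpa using this
    exact Fin.succAbove_ne _ j this
  have hch : ∀ j, ∃ z, p.succAbove z = σ ((σ.symm p).succAbove j) :=
    fun j => Fin.exists_succAbove_eq (hne j)
  choose τ0 hτ0 using hch
  have hinj : Function.Injective τ0 := by
    intro a b hab
    have h1 : σ ((σ.symm p).succAbove a) = σ ((σ.symm p).succAbove b) := by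
      rw [← hτ0 a, ← hτ0 b, hab]
    have h2 := σ.injective h1
    exact Fin.succAbove_right_injective h2
  exact ⟨Equiv.ofBijective τ0 (Finite.injective_iff_bijective.mp hinj),
    fun j => (hτ0 j).symm⟩

lemma Jf_symm {m : ℕ} (w : E n) {c : (Fin m → Fin n) → ℝ} (hc : IsSymC c) :
    IsSymC (Jf w c) := by
  intro σ K
  simp only [Jf]
  congr 1
  refine Fintype.sum_equiv σ _ _ fun i => ?_
  obtain ⟨τ, hτ⟩ := succAbove_conj σ (σ i)
  have hinv : σ.symm (σ i) = i := by simp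
  rw [hinv] at hτ
  have h1 : (K ∘ σ) i = K (σ i) := rfl
  have h2 : (K ∘ σ) ∘ i.succAbove = (K ∘ (σ i).succAbove) ∘ τ := by
    funext j
    show K (σ (i.succAbove j)) = K ((σ i).succAbove (τ j))
    rw [hτ j]
  rw [h1, h2, hc τ (K ∘ (σ i).succAbove)]

/-- the permutation of `Fin (m+1)` sending `i ↦ 0` and `i.succAbove j ↦ j.succ` -/
def shiftPerm {m : ℕ} (i : Fin (m + 1)) : Equiv.Perm (Fin (m + 1)) :=
  (finSuccEquiv' i).trans (finSuccEquiv' 0).symm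

lemma shiftPerm_at {m : ℕ} (i : Fin (m + 1)) : shiftPerm i i = 0 := by
  simp [shiftPerm, finSuccEquiv'_at, finSuccEquiv'_symm_none]

lemma shiftPerm_succAbove {m : ℕ} (i : Fin (m + 1)) (j : Fin m) :
    shiftPerm i (i.succAbove j) = j.succ := by
  simp only [shiftPerm, Equiv.trans_apply, finSuccEquiv'_succAbove, finSuccEquiv'_symm_some]
  exact Fin.zero_succAbove j

lemma cons_comp_shiftPerm {m : ℕ} (i : Fin (m + 1)) (k : Fin n) (K' : Fin m → Fin n) :
    (Fin.cons k K' : Fin (m + 1) → Fin n) ∘ (shiftPerm i) = i.insertNth k K' := by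
  funext x
  refine Fin.succAboveCases i ?_ ?_ x
  · show (Fin.cons k K' : Fin (m+1) → Fin n) (shiftPerm i i) = _
    rw [shiftPerm_at, Fin.insertNth_apply_same]
    rfl
  · intro j
    show (Fin.cons k K' : Fin (m+1) → Fin n) (shiftPerm i (i.succAbove j)) = _
    rw [shiftPerm_succAbove, Fin.insertNth_apply_succAbove]
    rfl

lemma symC_insertNth {m : ℕ} {d : (Fin (m + 1) → Fin n) → ℝ} (hd : IsSymC d)
    (i : Fin (m + 1)) (k : Fin n) (K' : Fin m → Fin n) :
    d (i.insertNth k K') = d (Fin.cons k K') := by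
  rw [← cons_comp_shiftPerm i k K']
  exact hd (shiftPerm i) (Fin.cons k K')

/-- the permutation of `Fin (m+1)` fixing `0` and acting as `σ` on successors -/
def consPerm {m : ℕ} (σ : Equiv.Perm (Fin m)) : Equiv.Perm (Fin (m + 1)) :=
  (finSuccEquiv' 0).trans ((Equiv.optionCongr σ).trans (finSuccEquiv' 0).symm)

lemma cons_comp_consPerm {m : ℕ} (σ : Equiv.Perm (Fin m)) (k : Fin n) (K : Fin m → Fin n) :
    (Fin.cons k K : Fin (m + 1) → Fin n) ∘ (consPerm σ) = Fin.cons k (K ∘ σ) := by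
  have hzero : consPerm σ 0 = 0 := by
    simp [consPerm, finSuccEquiv'_at, finSuccEquiv'_symm_none]
  funext x
  induction x using Fin.cases with
  | zero =>
    simp only [Function.comp_apply, hzero, Fin.cons_zero]
  | succ j =>
    have h1 : consPerm σ j.succ = (σ j).succ := by
      have hj : (j : Fin m).succ = (0 : Fin (m + 1)).succAbove j := (Fin.zero_succAbove j).symm
      simp only [consPerm, Equiv.trans_apply, hj, finSuccEquiv'_succAbove,
        Equiv.optionCongr_apply, Option.map_some, finSuccEquiv'_symm_some]
      exact Fin.zero_succAbove (σ j)
    simp only [Function.comp_apply, h1, Fin.cons_succ]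

lemma If_symm {m : ℕ} (w : E n) {d : (Fin (m + 1) → Fin n) → ℝ} (hd : IsSymC d) :
    IsSymC (If_ w d) := by
  intro σ K
  simp only [If_]
  refine Finset.sum_congr rfl fun k _ => ?_
  congr 1
  rw [← cons_comp_consPerm σ k K]
  exact hd (consPerm σ) (Fin.cons k K)
lemma adj {m : ℕ} (w : E n) (c' : (Fin m → Fin n) → ℝ) {d : (Fin (m + 1) → Fin n) → ℝ}
    (hd : IsSymC d) :
    ∑ K : Fin (m + 1) → Fin n, Jf w c' K * d K
      = ∑ K' : Fin m → Fin n, c' K' * If_ w d K' := by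
  classical
  have inner : ∀ i : Fin (m + 1),
      ∑ K : Fin (m + 1) → Fin n, w (K i) * c' (K ∘ i.succAbove) * d K
        = ∑ K' : Fin m → Fin n, c' K' * If_ w d K' := by
    intro i
    have e := Fin.insertNthEquiv (fun _ : Fin (m + 1) => Fin n) i
    rw [← Fintype.sum_equiv (Fin.insertNthEquiv (fun _ : Fin (m + 1) => Fin n) i)
      (fun p => w p.1 * c' p.2 * d (Fin.cons p.1 p.2))
      (fun K => w (K i) * c' (K ∘ i.succAbove) * d K) ?_]
    · rw [Fintype.sum_prod_type]
      rw [Finset.sum_comm]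
      refine Finset.sum_congr rfl fun K' _ => ?_
      rw [If_, Finset.mul_sum]
      refine Finset.sum_congr rfl fun k _ => ?_
      ring
    · intro p
      obtain ⟨k, K'⟩ := p
      have heq : (Fin.insertNthEquiv (fun _ : Fin (m + 1) => Fin n) i) (k, K')
          = i.insertNth k K' := rfl
      beta_reduce
      rw [heq]
      have h2 : (i.insertNth k K' : Fin (m+1) → Fin n) ∘ i.succAbove = K' := by
        funext j; simp
      rw [h2, symC_insertNth hd, Fin.insertNth_apply_same]
  have hsum : ∑ K : Fin (m + 1) → Fin n, Jf w c' K * d K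
      = ∑ i : Fin (m + 1), (∑ K : Fin (m + 1) → Fin n,
          w (K i) * c' (K ∘ i.succAbove) * d K) / (m + 1) :=
    calc ∑ K : Fin (m+1) → Fin n, Jf w c' K * d K
        = ∑ K : Fin (m+1) → Fin n, ∑ i : Fin (m+1),
            (w (K i) * c' (K ∘ i.succAbove) * d K) / (m + 1) := by
          refine Finset.sum_congr rfl fun K _ => ?_
          rw [Jf, div_mul_eq_mul_div, Finset.sum_mul, Finset.sum_div]
      _ = ∑ i : Fin (m+1), ∑ K : Fin (m+1) → Fin n,
            (w (K i) * c' (K ∘ i.succAbove) * d K) / (m + 1) := Finset.sum_comm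
      _ = ∑ i : Fin (m+1), (∑ K : Fin (m+1) → Fin n,
            w (K i) * c' (K ∘ i.succAbove) * d K) / (m + 1) := by
          exact Finset.sum_congr rfl fun i _ => (Finset.sum_div _ _ _).symm
  rw [hsum]
  rw [Finset.sum_congr rfl fun (i : Fin (m+1)) _ => by rw [inner i], Finset.sum_const,
    Finset.card_univ, Fintype.card_fin, nsmul_eq_mul]
  have hne : ((m : ℝ) + 1) ≠ 0 := by positivity
  push_cast
  field_simp

lemma cons_update {m : ℕ} (x y : E n) (r : Fin m → E n) :
    Function.update (Fin.cons y r : Fin (m + 1) → E n) 0 x = Fin.cons x r := by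
  funext j
  induction j using Fin.cases with
  | zero => simp
  | succ j =>
    rw [Function.update_of_ne (Fin.succ_ne_zero j)]
    simp

lemma contr_coeff {m : ℕ} {w : E n} {h : (Fin (m + 1) → E n) → ℝ} (hml : IsML h)
    (hz : contrZero w h) : ∀ K', If_ w (coeffT h) K' = 0 := by
  classical
  intro K'
  have he : ∀ k : Fin n, eV (Fin.cons k K') = Fin.cons (EuclideanSpace.single k 1) (eV K') := by
    intro k
    funext j
    induction j using Fin.cases with
    | zero => rfl
    | succ j => rfl
  have key : ∀ k, coeffT h (Fin.cons k K')
      = h (Function.update (Fin.cons w (eV K') : Fin (m + 1) → E n) 0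
          (EuclideanSpace.single k 1)) := by
    intro k
    rw [coeffT, he k, ← cons_update (EuclideanSpace.single k 1) w (eV K')]
  calc If_ w (coeffT h) K'
      = ∑ k, h (Function.update (Fin.cons w (eV K') : Fin (m + 1) → E n) 0
          (w k • EuclideanSpace.single k 1)) := by
        rw [If_]
        refine Finset.sum_congr rfl fun k _ => ?_
        rw [key k, hml.2]
    _ = h (Function.update (Fin.cons w (eV K') : Fin (m + 1) → E n) 0
          (∑ k, w k • EuclideanSpace.single k 1)) := (ml_update_sum hml _ _ _ _).symm
    _ = 0 := by
        rw [← euclid_decomp, cons_update]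
        exact hz 0 _ (Fin.cons_zero _ _)

lemma contr_of {m : ℕ} {w : E n} {d : (Fin (m + 1) → Fin n) → ℝ} (hd : IsSymC d)
    (h0 : ∀ K', If_ w d K' = 0) : contrZero w (evalT d) := by
  classical
  intro j v hvj
  rw [evalT]
  rw [← Fintype.sum_equiv (Fin.insertNthEquiv (fun _ : Fin (m + 1) => Fin n) j)
    (fun p => (w p.1 * ∏ j'', v (j.succAbove j'') (p.2 j'')) * d (Fin.cons p.1 p.2))
    (fun K => (∏ j', v j' (K j')) * d K) ?_]
  · rw [Fintype.sum_prod_type, Finset.sum_comm]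
    refine Finset.sum_eq_zero fun K' _ => ?_
    have : ∀ k, (w k * ∏ j'', v (j.succAbove j'') (K' j'')) * d (Fin.cons k K')
        = (∏ j'', v (j.succAbove j'') (K' j'')) * (w k * d (Fin.cons k K')) := by
      intro k; ring
    rw [Finset.sum_congr rfl fun k _ => this k, ← Finset.mul_sum]
    have := h0 K'
    rw [If_] at this
    rw [this, mul_zero]
  · intro p
    obtain ⟨k, K'⟩ := p
    have heq : (Fin.insertNthEquiv (fun _ : Fin (m + 1) => Fin n) j) (k, K')
        = j.insertNth k K' := rfl
    beta_reduce
    rw [heq]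
    rw [symC_insertNth hd]
    congr 1
    dsimp only
    rw [Fin.prod_univ_succAbove (fun j' => v j' ((j.insertNth k K' : Fin (m+1) → Fin n) j')) j]
    rw [Fin.insertNth_apply_same, hvj]
    congr 1
    refine Finset.prod_congr rfl fun j'' _ => ?_
    rw [Fin.insertNth_apply_succAbove]
lemma coeff_jApp {m : ℕ} (w : E n) (u : (Fin m → E n) → ℝ) :
    coeffT (jApp w u) = Jf w (coeffT u) := by
  funext K
  show jApp w u (eV K) = Jf w (coeffT u) K
  rw [jApp, Jf]
  congr 1
  refine Finset.sum_congr rfl fun i _ => ?_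
  have h1 : ⟪w, eV K i⟫ = w (K i) := by simp [eV, PiLp.inner_apply, EuclideanSpace.single_apply]
  rw [h1]
  rfl

lemma jApp_isML {m : ℕ} (w : E n) {u : (Fin m → E n) → ℝ} (hu : IsML u) :
    IsML (jApp w u) := by
  classical
  have key : ∀ (p : Fin (m + 1)) (v : Fin (m + 1) → E n) (i : Fin (m + 1)),
      ∃ r : E n → ℝ,
        (∀ x : E n, ⟪w, Function.update v p x i⟫
            * u (fun j => Function.update v p x (i.succAbove j)) = r x)
        ∧ (∀ x y, r (x + y) = r x + r y) ∧ (∀ (c : ℝ) x, r (c • x) = c * r x) := by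
    intro p v i
    rcases eq_or_ne i p with rfl | hne
    · refine ⟨fun x => ⟪w, x⟫ * u (fun j => v (i.succAbove j)), fun x => ?_, fun x y => ?_,
        fun c x => ?_⟩
      · have h1 : Function.update v i x i = x := Function.update_self _ _ _
        have h2 : (fun j => Function.update v i x (i.succAbove j))
            = fun j => v (i.succAbove j) := by
          funext j; rw [Function.update_of_ne (Fin.succAbove_ne i j)]
        rw [h1, h2]
      · dsimp only; rw [inner_add_right]; ring
      · dsimp only; rw [real_inner_smul_right]; ring
    · obtain ⟨j₀, hj₀⟩ := Fin.exists_succAbove_eq (Ne.symm hne)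
      refine ⟨fun x => ⟪w, v i⟫ * u (Function.update (fun j => v (i.succAbove j)) j₀ x),
        fun x => ?_, fun x y => ?_, fun c x => ?_⟩
      · have h1 : Function.update v p x i = v i := Function.update_of_ne hne _ _
        have h2 : (fun j => Function.update v p x (i.succAbove j))
            = Function.update (fun j => v (i.succAbove j)) j₀ x := by
          funext j
          rcases eq_or_ne j j₀ with rfl | hj
          · rw [hj₀, Function.update_self, Function.update_self]
          · have hne2 : i.succAbove j ≠ p := fun hcon => hj (Fin.succAbove_right_injective
              (hcon.trans hj₀.symm))
            rw [Function.update_of_ne hne2, Function.update_of_ne hj]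
        rw [h1, h2]
      · dsimp only; rw [hu.1]; ring
      · dsimp only; rw [hu.2]; ring
  constructor
  · intro p v x y
    simp only [jApp]
    choose r hr hadd _ using key p v
    rw [Finset.sum_congr rfl fun i _ => hr i (x + y),
      Finset.sum_congr rfl fun i _ => hr i x,
      Finset.sum_congr rfl fun i _ => hr i y,
      Finset.sum_congr rfl fun i _ => hadd i x y, Finset.sum_add_distrib, add_div]
  · intro p v c x
    simp only [jApp]
    choose r hr _ hsmul using key p v
    rw [Finset.sum_congr rfl fun i _ => hr i (c • x),
      Finset.sum_congr rfl fun i _ => hr i x,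
      Finset.sum_congr rfl fun i _ => hsmul i c x, ← Finset.mul_sum, mul_div_assoc]
lemma einner {ι : Type*} [Fintype ι] (a b : EuclideanSpace ℝ ι) :
    ⟪a, b⟫ = ∑ i, a i * b i := by
  simp [PiLp.inner_apply, RCLike.inner_apply, mul_comm]

def Jlin (m : ℕ) (w : E n) :
    EuclideanSpace ℝ (Fin m → Fin n) →ₗ[ℝ] EuclideanSpace ℝ (Fin (m + 1) → Fin n) where
  toFun c := WithLp.toLp 2 (Jf w c)
  map_add' c c' := by
    apply WithLp.ofLp_injective 2
    funext K
    show (∑ i, w (K i) * (c + c') (K ∘ i.succAbove)) / (m + 1)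
        = (∑ i, w (K i) * c (K ∘ i.succAbove)) / (m + 1)
          + (∑ i, w (K i) * c' (K ∘ i.succAbove)) / (m + 1)
    have hp : ∀ L, (c + c') L = c L + c' L := fun _ => rfl
    simp only [hp, mul_add, Finset.sum_add_distrib, add_div]
  map_smul' r c := by
    apply WithLp.ofLp_injective 2
    funext K
    show (∑ i, w (K i) * (r • c) (K ∘ i.succAbove)) / (m + 1)
        = r * ((∑ i, w (K i) * c (K ∘ i.succAbove)) / (m + 1))
    have hp : ∀ L, (r • c) L = r * c L := fun _ => rfl
    simp only [hp]
    have hq : ∀ i : Fin (m + 1), w (K i) * (r * c (K ∘ i.succAbove))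
        = r * (w (K i) * c (K ∘ i.succAbove)) := fun i => by ring
    rw [Finset.sum_congr rfl fun i _ => hq i, ← Finset.mul_sum, mul_div_assoc]

lemma Jlin_apply {m : ℕ} (w : E n) (c : EuclideanSpace ℝ (Fin m → Fin n))
    (K : Fin (m + 1) → Fin n) : Jlin m w c K = Jf w c K := rfl

def SymSub (m : ℕ) : Submodule ℝ (EuclideanSpace ℝ (Fin m → Fin n)) where
  carrier := {c | IsSymC fun K => c K}
  add_mem' := by
    intro a b ha hb σ K
    show (a + b) (K ∘ σ) = (a + b) K
    have hp : ∀ L, (a + b) L = a L + b L := fun _ => rfl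
    rw [hp, hp, show a (K ∘ σ) = a K from ha σ K, show b (K ∘ σ) = b K from hb σ K]
  zero_mem' := fun _ _ => rfl
  smul_mem' := by
    intro r a ha σ K
    show (r • a) (K ∘ σ) = (r • a) K
    have hp : ∀ L, (r • a) L = r * a L := fun _ => rfl
    rw [hp, hp, show a (K ∘ σ) = a K from ha σ K]

lemma evalT_add {m : ℕ} (a b : (Fin m → Fin n) → ℝ) (v : Fin m → E n) :
    evalT (fun K => a K + b K) v = evalT a v + evalT b v := by
  simp [evalT, mul_add, Finset.sum_add_distrib]

lemma Jf_sub {m : ℕ} (w : E n) (a b : (Fin m → Fin n) → ℝ) (K : Fin (m + 1) → Fin n) :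
    Jf w (fun L => a L - b L) K = Jf w a K - Jf w b K := by
  simp [Jf, mul_sub, Finset.sum_sub_distrib, sub_div]

end X16

/-- Orthogonal decomposition `⊗^{m+1}_S E^* = ran(j_ξ) ⊕ ker(ι_{ξ^♯})` (for a nonzero
covector, dual vector `w`): the two summands are orthogonal, and every symmetric
`(m+1)`-tensor `T` decomposes uniquely as `T = j_ξ u + h` with `h ∈ ker ι_{ξ^♯}`. -/
theorem xray_stmt16 {n m : ℕ} (w : E n) (hw : w ≠ 0) :
    (∀ (u : (Fin m → E n) → ℝ) (h : (Fin (m + 1) → E n) → ℝ),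
      IsSymMultilinear u → IsSymMultilinear h → contrZero w h →
      tInner (jApp w u) h = 0) ∧
    (∀ T : (Fin (m + 1) → E n) → ℝ, IsSymMultilinear T →
      ∃ (u : (Fin m → E n) → ℝ) (h : (Fin (m + 1) → E n) → ℝ),
        IsSymMultilinear u ∧ IsSymMultilinear h ∧ contrZero w h ∧
        (∀ v, T v = jApp w u v + h v) ∧
        (∀ (u₂ : (Fin m → E n) → ℝ) (h₂ : (Fin (m + 1) → E n) → ℝ),
          IsSymMultilinear u₂ → IsSymMultilinear h₂ → contrZero w h₂ →
          (∀ v, T v = jApp w u₂ v + h₂ v) →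
          (∀ v, jApp w u₂ v = jApp w u v) ∧ h₂ = h)) := by
  classical
  constructor
  · -- orthogonality
    intro u h hu hh hz
    have hdsym : X16.IsSymC (X16.coeffT h) := X16.coeff_symm hh.2.2
    have h0 : ∀ K', X16.If_ w (X16.coeffT h) K' = 0 := X16.contr_coeff ⟨hh.1, hh.2.1⟩ hz
    have h1 : tInner (jApp w u) h
        = ∑ K : Fin (m + 1) → Fin n, X16.coeffT (jApp w u) K * X16.coeffT h K := rfl
    rw [h1, X16.coeff_jApp, X16.adj w _ hdsym]
    exact Finset.sum_eq_zero fun K' _ => by rw [h0 K', mul_zero]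
  · -- decomposition
    intro T hT
    obtain ⟨y, hyW, z, hzperp, hczy⟩ :=
      Submodule.exists_add_mem_mem_orthogonal
        (K := (X16.SymSub (n := n) m).map (X16.Jlin m w)) (WithLp.toLp 2 (X16.coeffT T))
    obtain ⟨cu, hcu, hJcu⟩ := hyW
    have hcusym : X16.IsSymC (fun K => cu K) := hcu
    have hcz : ∀ K, X16.coeffT T K = X16.Jf w (fun L => cu L) K + z K := by
      intro K
      calc X16.coeffT T K = (y + z) K := congrArg (fun q : EuclideanSpace ℝ (Fin (m + 1) → Fin n) => q K) hczy
        _ = y K + z K := rfl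
        _ = X16.Jf w (fun L => cu L) K + z K := by
            have h2 : X16.Jlin m w cu K = y K := congrArg (fun q : EuclideanSpace ℝ (Fin (m + 1) → Fin n) => q K) hJcu
            rw [← h2]; rfl
    set zf : (Fin (m + 1) → Fin n) → ℝ :=
      fun K => X16.coeffT T K - X16.Jf w (fun L => cu L) K with hzfdef
    have hzf : ∀ K, z K = zf K := by
      intro K
      have := hcz K
      simp only [hzfdef]
      linarith
    have hcTsym : X16.IsSymC (X16.coeffT T) := X16.coeff_symm hT.2.2
    have hJcusym : X16.IsSymC (X16.Jf w (fun L => cu L)) := X16.Jf_symm w hcusym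
    have hzfsym : X16.IsSymC zf := by
      intro σ K
      simp only [hzfdef]
      rw [hcTsym σ K, hJcusym σ K]
    have hIzsym : X16.IsSymC (X16.If_ w zf) := X16.If_symm w hzfsym
    have hJIzW : X16.Jlin m w (WithLp.toLp 2 (X16.If_ w zf))
        ∈ (X16.SymSub (n := n) m).map (X16.Jlin m w) :=
      Submodule.mem_map_of_mem hIzsym
    have hperp : ⟪X16.Jlin m w (WithLp.toLp 2 (X16.If_ w zf)), z⟫ = 0 := hzperp _ hJIzW
    have hsq : ∑ K' : Fin m → Fin n, X16.If_ w zf K' * X16.If_ w zf K' = 0 := by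
      have h1 : ⟪X16.Jlin m w (WithLp.toLp 2 (X16.If_ w zf)), z⟫
          = ∑ K : Fin (m + 1) → Fin n, X16.Jf w (X16.If_ w zf) K * zf K := by
        rw [X16.einner]
        refine Finset.sum_congr rfl fun K _ => ?_
        rw [hzf K]
        rfl
      rw [h1, X16.adj w _ hzfsym] at hperp
      exact hperp
    have hIz0 : ∀ K', X16.If_ w zf K' = 0 := by
      intro K'
      have h2 := (Finset.sum_eq_zero_iff_of_nonneg
        (fun K' _ => mul_self_nonneg (X16.If_ w zf K'))).mp hsq K' (Finset.mem_univ K')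
      exact mul_self_eq_zero.mp h2
    -- the pieces
    have hcoeffu : X16.coeffT (X16.evalT (fun K => cu K)) = fun K => cu K := by
      funext K; exact X16.evalT_eV _ K
    have hja : ∀ v, jApp w (X16.evalT (fun K => cu K)) v
        = X16.evalT (X16.Jf w (fun L => cu L)) v := by
      intro v
      rw [X16.expansion (X16.jApp_isML w (X16.evalT_isML _)) v, X16.coeff_jApp, hcoeffu]
    have hdec : ∀ v, T v = jApp w (X16.evalT (fun K => cu K)) v + X16.evalT zf v := by
      intro v
      rw [X16.expansion ⟨hT.1, hT.2.1⟩ v, hja v]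
      rw [show X16.coeffT T = fun K => X16.Jf w (fun L => cu L) K + zf K by
        funext K; simp only [hzfdef]; ring]
      exact X16.evalT_add _ _ v
    refine ⟨X16.evalT (fun K => cu K), X16.evalT zf,
      ⟨(X16.evalT_isML _).1, (X16.evalT_isML _).2, X16.evalT_symm hcusym⟩,
      ⟨(X16.evalT_isML _).1, (X16.evalT_isML _).2, X16.evalT_symm hzfsym⟩,
      X16.contr_of hzfsym hIz0, hdec, ?_⟩
    -- uniqueness
    intro u₂ h₂ hu₂ hh₂ hz₂ hdec₂
    have hc2sym : X16.IsSymC (X16.coeffT u₂) := X16.coeff_symm hu₂.2.2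
    have hd2sym : X16.IsSymC (X16.coeffT h₂) := X16.coeff_symm hh₂.2.2
    have hIf2 : ∀ K', X16.If_ w (X16.coeffT h₂) K' = 0 :=
      X16.contr_coeff ⟨hh₂.1, hh₂.2.1⟩ hz₂
    have hcz2 : ∀ K, X16.coeffT T K = X16.Jf w (X16.coeffT u₂) K + X16.coeffT h₂ K := by
      intro K
      have h3 := hdec₂ (X16.eV K)
      have h4 : X16.coeffT (jApp w u₂) K = X16.Jf w (X16.coeffT u₂) K :=
        congrFun (X16.coeff_jApp w u₂) K
      rw [← h4]
      exact h3
    set xf : (Fin (m + 1) → Fin n) → ℝ :=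
      fun K => X16.Jf w (X16.coeffT u₂) K - X16.Jf w (fun L => cu L) K with hxfdef
    have hx_eq : ∀ K, xf K = zf K - X16.coeffT h₂ K := by
      intro K
      have h5 := hcz K
      have h6 := hcz2 K
      have h7 := hzf K
      simp only [hxfdef, hzfdef]
      simp only [hzfdef] at h7
      linarith
    have hxsym : X16.IsSymC xf := by
      intro σ K
      rw [hx_eq, hx_eq, hzfsym σ K, hd2sym σ K]
    have hIfx : ∀ K', X16.If_ w xf K' = 0 := by
      intro K'
      have h8 : X16.If_ w xf K' = X16.If_ w zf K' - X16.If_ w (X16.coeffT h₂) K' := by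
        simp only [X16.If_]
        rw [← Finset.sum_sub_distrib]
        exact Finset.sum_congr rfl fun k _ => by rw [hx_eq]; ring
      rw [h8, hIz0 K', hIf2 K', sub_zero]
    have hsub_sym : X16.IsSymC (fun L => X16.coeffT u₂ L - cu L) := by
      intro σ K
      show X16.coeffT u₂ (K ∘ σ) - cu (K ∘ σ) = X16.coeffT u₂ K - cu K
      rw [hc2sym σ K, show (cu (K ∘ σ) : ℝ) = cu K from hcusym σ K]
    have hxf_J : ∀ K, xf K = X16.Jf w (fun L => X16.coeffT u₂ L - cu L) K := by
      intro K
      rw [X16.Jf_sub]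
    have hsqx : ∑ K : Fin (m + 1) → Fin n, xf K * xf K = 0 := by
      have h9 : ∑ K : Fin (m + 1) → Fin n, xf K * xf K
          = ∑ K : Fin (m + 1) → Fin n,
              X16.Jf w (fun L => X16.coeffT u₂ L - cu L) K * xf K :=
        Finset.sum_congr rfl fun K _ => by rw [← hxf_J K]
      rw [h9, X16.adj w _ hxsym]
      exact Finset.sum_eq_zero fun K' _ => by rw [hIfx K', mul_zero]
    have hx0 : ∀ K, xf K = 0 := by
      intro K
      have h10 := (Finset.sum_eq_zero_iff_of_nonneg
        (fun K _ => mul_self_nonneg (xf K))).mp hsqx K (Finset.mem_univ K)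
      exact mul_self_eq_zero.mp h10
    have hJeq : X16.Jf w (X16.coeffT u₂) = X16.Jf w (fun L => cu L) := by
      funext K
      have := hx0 K
      simp only [hxfdef] at this
      linarith
    have hgoal1 : ∀ v, jApp w u₂ v = jApp w (X16.evalT (fun K => cu K)) v := by
      intro v
      rw [X16.expansion (X16.jApp_isML w ⟨hu₂.1, hu₂.2.1⟩) v, X16.coeff_jApp, hJeq, hja v]
    refine ⟨hgoal1, ?_⟩
    funext v
    have h11 := hdec₂ v
    have h12 := hdec v
    rw [hgoal1 v] at h11
    linarith
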